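/- arXiv:1702.04903 — 8 statements merged into one kernel-verified Lean document; each statement's English description precedes it below -/
import Mathlib

section
/- Let B be an algebra with a nondegenerate product (for all nonzero b there exist b' with bb' ≠ 0 and b'' with b''b ≠ 0), and let y be a multiplier of B (a pair of left/right multiplication-compatible maps) such that yB = B and By = B. Then y is invertible in the multiplier algebra M(B). -/
/-- If `B` is a nondegenerate (possibly non-unital) ℂ-algebra and
`y = (L, R)` is a multiplier of `B` with `yB = B` and `By = B`, then `y` is
invertible in the multiplier algebra `M(B)`. -/
theorem multiplier_invertible_of_surjective
    {B : Type*} [NonUnitalRing B] [Module ℂ B]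
    [SMulCommClass ℂ B B] [IsScalarTower ℂ B B]
    (hnd_left : ∀ b : B, (∀ b' : B, b * b' = 0) → b = 0)
    (hnd_right : ∀ b : B, (∀ b' : B, b' * b = 0) → b = 0)
    (L R : B →ₗ[ℂ] B)
    (hL : ∀ a b : B, L (a * b) = L a * b)
    (hR : ∀ a b : B, R (a * b) = a * R b)
    (hLR : ∀ a b : B, a * L b = R a * b)
    (hLsurj : Function.Surjective L)   -- yB = B
    (hRsurj : Function.Surjective R)   -- By = B
    :
    ∃ L' R' : B →ₗ[ℂ] B,
      (∀ a b : B, L' (a * b) = L' a * b) ∧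
      (∀ a b : B, R' (a * b) = a * R' b) ∧
      (∀ a b : B, a * L' b = R' a * b) ∧
      L ∘ₗ L' = LinearMap.id ∧ L' ∘ₗ L = LinearMap.id ∧
      R ∘ₗ R' = LinearMap.id ∧ R' ∘ₗ R = LinearMap.id := by
  have hLinj : Function.Injective L := by
    rw [injective_iff_map_eq_zero]
    intro b hb
    apply hnd_right
    intro b'
    obtain ⟨a, rfl⟩ := hRsurj b'
    rw [← hLR, hb, mul_zero]
  have hRinj : Function.Injective R := by
    rw [injective_iff_map_eq_zero]
    intro b hb
    apply hnd_left
    intro b'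
    obtain ⟨a, rfl⟩ := hLsurj b'
    rw [hLR, hb, zero_mul]
  let eL := LinearEquiv.ofBijective L ⟨hLinj, hLsurj⟩
  let eR := LinearEquiv.ofBijective R ⟨hRinj, hRsurj⟩
  refine ⟨eL.symm.toLinearMap, eR.symm.toLinearMap, ?_, ?_, ?_, ?_, ?_, ?_, ?_⟩
  · intro a b
    apply hLinj
    have h1 : L (eL.symm.toLinearMap (a * b)) = a * b := eL.apply_symm_apply _
    have h2 : L (eL.symm.toLinearMap a) = a := eL.apply_symm_apply _
    rw [h1, hL, h2]
  · intro a b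
    apply hRinj
    have h1 : R (eR.symm.toLinearMap (a * b)) = a * b := eR.apply_symm_apply _
    have h2 : R (eR.symm.toLinearMap b) = b := eR.apply_symm_apply _
    rw [h1, hR, h2]
  · intro a b
    obtain ⟨b₀, rfl⟩ := hLsurj b
    have h1 : eL.symm.toLinearMap (L b₀) = b₀ := eL.symm_apply_apply _
    have h2 : R (eR.symm.toLinearMap a) = a := eR.apply_symm_apply _
    rw [h1, hLR, h2]
  · ext x; exact eL.apply_symm_apply x
  · ext x; exact eL.symm_apply_apply x
  · ext x; exact eR.apply_symm_apply x
  · ext x; exact eR.symm_apply_apply x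
end

section
/- Let B and C be finite-dimensional ℂ-algebras, E ∈ B ⊗ C an idempotent, and S_B : B → C, S_C : C → B algebra anti-isomorphisms satisfying E(b ⊗ 1) = E(1 ⊗ S_B(b)) and (1 ⊗ c)E = (S_C(c) ⊗ 1)E for all b ∈ B, c ∈ C. Suppose (S_B ⊗ S_C)(E) = ζ(E), where ζ : B ⊗ C → C ⊗ B is the flip. Then (S_C ∘ S_B ⊗ S_B ∘ S_C)(E) = E. -/
open TensorProduct

/-- For a regular separability idempotent `E` with `(S_B ⊗ S_C)(E) = ζ(E)`,
we have `(S_C∘S_B ⊗ S_B∘S_C)(E) = E`. -/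
theorem regular_sep_idempotent_square
    {B C : Type*} [Ring B] [Algebra ℂ B] [Ring C] [Algebra ℂ C]
    [FiniteDimensional ℂ B] [FiniteDimensional ℂ C]
    (SB : B →ₗ[ℂ] C) (SC : C →ₗ[ℂ] B)
    (hSBanti : ∀ a b : B, SB (a * b) = SB b * SB a)
    (hSCanti : ∀ a b : C, SC (a * b) = SC b * SC a)
    (hSBbij : Function.Bijective SB) (hSCbij : Function.Bijective SC)
    (E : B ⊗[ℂ] C)
    (hEidem : E * E = E)
    (hE1 : ∀ b : B, E * (b ⊗ₜ[ℂ] (1 : C)) = E * ((1 : B) ⊗ₜ[ℂ] SB b))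
    (hE2 : ∀ c : C, ((1 : B) ⊗ₜ[ℂ] c) * E = (SC c ⊗ₜ[ℂ] (1 : C)) * E)
    (hreg : TensorProduct.map SB SC E = TensorProduct.comm ℂ B C E) :
    TensorProduct.map (SC ∘ₗ SB) (SB ∘ₗ SC) E = E := by
  have h : ∀ x : B ⊗[ℂ] C,
      TensorProduct.map SC SB (TensorProduct.comm ℂ B C x) =
        TensorProduct.comm ℂ C B (TensorProduct.map SB SC x) := by
    intro x
    induction x using TensorProduct.induction_on with
    | zero => simp
    | tmul b c => simp
    | add x y hx hy => simp [hx, hy]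
  have h2 : ∀ x : B ⊗[ℂ] C,
      TensorProduct.comm ℂ C B (TensorProduct.comm ℂ B C x) = x := by
    intro x
    induction x using TensorProduct.induction_on with
    | zero => simp
    | tmul b c => simp
    | add x y hx hy => simp [hx, hy]
  rw [TensorProduct.map_comp, LinearMap.comp_apply, hreg, h, hreg, h2]
end

section
/- Let B, C be finite-dimensional ℂ-algebras with an idempotent E ∈ B ⊗ C, anti-isomorphisms S_B : B → C and S_C : C → B satisfying E(b ⊗ 1) = E(1 ⊗ S_B(b)) and (1 ⊗ c)E = (S_C(c) ⊗ 1)E, and linear functionals φ_B on B and φ_C on C satisfying (φ_B ⊗ id)(E) = 1 and (id ⊗ φ_C)(E) = 1. Then for any linear functional g on B, the element y = (id ⊗ (g ∘ S_C))(E) ∈ B satisfies g(b) = φ_B(by) for all b ∈ B. -/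
open TensorProduct

/-- `(f ⊗ id)(E)` for a functional `f` on `B`. -/
noncomputable def lTens {B C : Type*} [AddCommGroup B] [Module ℂ B]
    [AddCommGroup C] [Module ℂ C] (f : B →ₗ[ℂ] ℂ) :
    B ⊗[ℂ] C →ₗ[ℂ] C :=
  (TensorProduct.lid ℂ C).toLinearMap ∘ₗ TensorProduct.map f LinearMap.id

/-- `(id ⊗ g)(E)` for a functional `g` on `C`. -/
noncomputable def rTens {B C : Type*} [AddCommGroup B] [Module ℂ B]
    [AddCommGroup C] [Module ℂ C] (g : C →ₗ[ℂ] ℂ) :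
    B ⊗[ℂ] C →ₗ[ℂ] B :=
  (TensorProduct.rid ℂ B).toLinearMap ∘ₗ TensorProduct.map LinearMap.id g

/-- For any functional `g` on `B`, the element `y = (id ⊗ g∘S_C)(E)`
satisfies `g(b) = φ_B(b y)` for all `b ∈ B`. -/
theorem radon_nikodym_right
    {B C : Type*} [Ring B] [Algebra ℂ B] [Ring C] [Algebra ℂ C]
    [FiniteDimensional ℂ B] [FiniteDimensional ℂ C]
    (SB : B →ₗ[ℂ] C) (SC : C →ₗ[ℂ] B)
    (hSBanti : ∀ a b : B, SB (a * b) = SB b * SB a)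
    (hSCanti : ∀ a b : C, SC (a * b) = SC b * SC a)
    (hSBbij : Function.Bijective SB) (hSCbij : Function.Bijective SC)
    (E : B ⊗[ℂ] C)
    (hEidem : E * E = E)
    (hE1 : ∀ b : B, E * (b ⊗ₜ[ℂ] (1 : C)) = E * ((1 : B) ⊗ₜ[ℂ] SB b))
    (hE2 : ∀ c : C, ((1 : B) ⊗ₜ[ℂ] c) * E = (SC c ⊗ₜ[ℂ] (1 : C)) * E)
    (φB : B →ₗ[ℂ] ℂ) (φC : C →ₗ[ℂ] ℂ)
    (hφB : lTens φB E = 1) (hφC : rTens φC E = 1)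
    (g : B →ₗ[ℂ] ℂ) :
    ∀ b : B, g b = φB (b * rTens (g ∘ₗ SC) E) := by
  intro b
  obtain ⟨c, hc⟩ := hSCbij.2 b
  have hSC1 : SC 1 = 1 := by
    obtain ⟨c1, hc1⟩ := hSCbij.2 (1 : B)
    have h := hSCanti c1 1
    rw [mul_one, hc1, mul_one] at h
    exact h.symm
  have lem1 : ∀ x : B ⊗[ℂ] C,
      rTens (g ∘ₗ SC) ((b ⊗ₜ[ℂ] (1 : C)) * x) = b * rTens (g ∘ₗ SC) x := by
    intro x
    induction x using TensorProduct.induction_on with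
    | zero => simp
    | tmul a d =>
        simp [rTens, Algebra.TensorProduct.tmul_mul_tmul, mul_smul_comm]
    | add x y hx hy => simp [mul_add, hx, hy]
  have lem2 : ∀ x : B ⊗[ℂ] C,
      φB (rTens (g ∘ₗ SC) (((1 : B) ⊗ₜ[ℂ] c) * x)) = g (SC (lTens φB x) * b) := by
    intro x
    induction x using TensorProduct.induction_on with
    | zero => simp
    | tmul a d =>
        simp only [rTens, lTens, Algebra.TensorProduct.tmul_mul_tmul, one_mul,
          LinearMap.coe_comp, LinearEquiv.coe_coe, Function.comp_apply,
          TensorProduct.map_tmul, LinearMap.id_coe, id_eq, TensorProduct.rid_tmul,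
          TensorProduct.lid_tmul, map_smul, LinearMap.smul_apply, smul_mul_assoc,
          hSCanti, hc, smul_eq_mul]
        ring
    | add x y hx hy => simp [mul_add, add_mul, hx, hy]
  have key : ((1 : B) ⊗ₜ[ℂ] c) * E = (b ⊗ₜ[ℂ] (1 : C)) * E := by
    rw [hE2, hc]
  calc g b = g (SC (lTens φB E) * b) := by rw [hφB]; simp [hSC1]
    _ = φB (rTens (g ∘ₗ SC) (((1 : B) ⊗ₜ[ℂ] c) * E)) := (lem2 E).symm
    _ = φB (b * rTens (g ∘ₗ SC) E) := by rw [key, lem1]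
end

section
/- With B, C, E, S_B, S_C, φ_B, φ_C as in the setup of a separability idempotent (E idempotent in B ⊗ C, E(b⊗1) = E(1⊗S_B(b)), (1⊗c)E = (S_C(c)⊗1)E, (φ_B⊗id)E = 1, (id⊗φ_C)E = 1, and φ_B faithful), for any linear functional g on B the element y' = (id ⊗ (g ∘ S_B⁻¹))(E) satisfies g(b) = φ_B(y'b) for all b ∈ B; consequently, every linear functional on B is of the form φ_B(y' ·) for some y' ∈ B. -/
open TensorProduct

/-- For any functional `g` on `B`, the element `y' = (id ⊗ g∘S_B⁻¹)(E)`
satisfies `g(b) = φ_B(y' b)`; consequently every functional on `B` has the form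
`φ_B(y' ·)`. -/
theorem radon_nikodym_left
    {B C : Type*} [Ring B] [Algebra ℂ B] [Ring C] [Algebra ℂ C]
    [FiniteDimensional ℂ B] [FiniteDimensional ℂ C]
    (SB : B ≃ₗ[ℂ] C) (SC : C →ₗ[ℂ] B)
    (hSBanti : ∀ a b : B, SB (a * b) = SB b * SB a)
    (hSCanti : ∀ a b : C, SC (a * b) = SC b * SC a)
    (hSCbij : Function.Bijective SC)
    (E : B ⊗[ℂ] C)
    (hEidem : E * E = E)
    (hE1 : ∀ b : B, E * (b ⊗ₜ[ℂ] (1 : C)) = E * ((1 : B) ⊗ₜ[ℂ] SB b))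
    (hE2 : ∀ c : C, ((1 : B) ⊗ₜ[ℂ] c) * E = (SC c ⊗ₜ[ℂ] (1 : C)) * E)
    (φB : B →ₗ[ℂ] ℂ) (φC : C →ₗ[ℂ] ℂ)
    (hφB : lTens φB E = 1) (hφC : rTens φC E = 1)
    (hφBfaith_l : ∀ a : B, (∀ b : B, φB (a * b) = 0) → a = 0)
    (hφBfaith_r : ∀ a : B, (∀ b : B, φB (b * a) = 0) → a = 0)
    (g : B →ₗ[ℂ] ℂ) :
    (∀ b : B, g b = φB (rTens (g ∘ₗ (SB.symm : C →ₗ[ℂ] B)) E * b)) ∧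
    (∃ y' : B, ∀ b : B, g b = φB (y' * b)) := by
  set h : C →ₗ[ℂ] ℂ := g ∘ₗ (SB.symm : C →ₗ[ℂ] B) with hh
  have aux1 : ∀ (t : B ⊗[ℂ] C) (b : B),
      rTens h t * b = rTens h (t * (b ⊗ₜ[ℂ] (1 : C))) := by
    intro t b
    induction t using TensorProduct.induction_on with
    | zero => simp
    | tmul x y =>
        simp [rTens, Algebra.TensorProduct.tmul_mul_tmul, smul_mul_assoc]
    | add s t hs ht => simp [add_mul, map_add, hs, ht]
  have aux2 : ∀ t : B ⊗[ℂ] C, φB (rTens h t) = h (lTens φB t) := by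
    intro t
    induction t using TensorProduct.induction_on with
    | zero => simp
    | tmul x y => simp [rTens, lTens, mul_comm]
    | add s t hs ht => simp [map_add, hs, ht]
  have aux3 : ∀ (t : B ⊗[ℂ] C) (c : C),
      lTens φB (t * ((1 : B) ⊗ₜ[ℂ] c)) = lTens φB t * c := by
    intro t c
    induction t using TensorProduct.induction_on with
    | zero => simp
    | tmul x y =>
        simp [lTens, Algebra.TensorProduct.tmul_mul_tmul, smul_mul_assoc]
    | add s t hs ht => simp [add_mul, map_add, hs, ht, aux2]
  have key : ∀ b : B, g b = φB (rTens h E * b) := by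
    intro b
    rw [aux1, hE1, aux2, aux3, hφB, one_mul]
    simp [hh]
  exact ⟨key, ⟨rTens h E, key⟩⟩
end

section
/- With B, C, E, S_B, S_C a regular separability idempotent (finite-dimensional setting) and F₁ = (id ⊗ S_C)(E) ∈ B ⊗ B, the map Δ_B : B → B ⊗ B defined by Δ_B(u) = F₁(1 ⊗ u) is coassociative: (Δ_B ⊗ id)∘Δ_B = (id ⊗ Δ_B)∘Δ_B. -/
open TensorProduct

/-- The coproduct `Δ_B(u) = F₁ (1 ⊗ u)` on `B`, where `F₁ = (id ⊗ S_C)(E)`. -/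
noncomputable def deltaB {B C : Type*} [Ring B] [Algebra ℂ B] [Ring C] [Algebra ℂ C]
    (SC : C →ₗ[ℂ] B) (E : B ⊗[ℂ] C) : B →ₗ[ℂ] B ⊗[ℂ] B :=
  (LinearMap.mulLeft ℂ (TensorProduct.map LinearMap.id SC E)) ∘ₗ
    (Algebra.TensorProduct.includeRight : B →ₐ[ℂ] B ⊗[ℂ] B).toLinearMap

/-- The coproduct `Δ_B(u) = F₁(1 ⊗ u)` is coassociative. -/
theorem deltaB_coassoc
    {B C : Type*} [Ring B] [Algebra ℂ B] [Ring C] [Algebra ℂ C]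
    [FiniteDimensional ℂ B] [FiniteDimensional ℂ C]
    (SB : B →ₗ[ℂ] C) (SC : C →ₗ[ℂ] B)
    (hSBanti : ∀ a b : B, SB (a * b) = SB b * SB a)
    (hSCanti : ∀ a b : C, SC (a * b) = SC b * SC a)
    (hSBbij : Function.Bijective SB) (hSCbij : Function.Bijective SC)
    (E : B ⊗[ℂ] C)
    (hEidem : E * E = E)
    (hE1 : ∀ b : B, E * (b ⊗ₜ[ℂ] (1 : C)) = E * ((1 : B) ⊗ₜ[ℂ] SB b))
    (hE2 : ∀ c : C, ((1 : B) ⊗ₜ[ℂ] c) * E = (SC c ⊗ₜ[ℂ] (1 : C)) * E)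
    (φB : B →ₗ[ℂ] ℂ) (φC : C →ₗ[ℂ] ℂ)
    (hφB : lTens φB E = 1) (hφC : rTens φC E = 1)
    (hreg : TensorProduct.map SB SC E = TensorProduct.comm ℂ B C E) :
    ∀ u : B,
      TensorProduct.assoc ℂ B B B
          (TensorProduct.map (deltaB SC E) LinearMap.id (deltaB SC E u))
        = TensorProduct.map LinearMap.id (deltaB SC E) (deltaB SC E u) := by
  set F : B ⊗[ℂ] B := TensorProduct.map LinearMap.id SC E with hF
  have hdelta : ∀ u : B, deltaB SC E u = F * ((1 : B) ⊗ₜ[ℂ] u) := by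
    intro u
    simp [deltaB, LinearMap.mulLeft_apply, hF]
  -- pushing `map id SC` through left/right multiplications
  have hA : ∀ (c : C) (x : B ⊗[ℂ] C),
      TensorProduct.map (LinearMap.id) SC (((1 : B) ⊗ₜ[ℂ] c) * x)
        = (TensorProduct.map LinearMap.id SC x) * ((1 : B) ⊗ₜ[ℂ] SC c) := by
    intro c x
    induction x using TensorProduct.induction_on with
    | zero => simp
    | tmul a b =>
        simp [Algebra.TensorProduct.tmul_mul_tmul, hSCanti]
    | add x y hx hy =>
        simp only [mul_add, add_mul, map_add, hx, hy]
  have hB : ∀ (b : B) (x : B ⊗[ℂ] C),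
      TensorProduct.map (LinearMap.id) SC ((b ⊗ₜ[ℂ] (1 : C)) * x)
        = (b ⊗ₜ[ℂ] (1 : B)) * (TensorProduct.map LinearMap.id SC x) := by
    intro b x
    induction x using TensorProduct.induction_on with
    | zero => simp
    | tmul a b' => simp [Algebra.TensorProduct.tmul_mul_tmul]
    | add x y hx hy =>
        simp only [mul_add, add_mul, map_add, hx, hy]
  -- key fact: (u ⊗ 1) F = F (1 ⊗ u)
  have key : ∀ u : B, (u ⊗ₜ[ℂ] (1 : B)) * F = F * ((1 : B) ⊗ₜ[ℂ] u) := by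
    intro u
    obtain ⟨c, rfl⟩ := hSCbij.2 u
    have := congrArg (TensorProduct.map (LinearMap.id) SC) (hE2 c)
    rw [hA, hB] at this
    exact this.symm
  -- assoc as an algebra map
  have hassoc : ∀ x : (B ⊗[ℂ] B) ⊗[ℂ] B,
      TensorProduct.assoc ℂ B B B x = Algebra.TensorProduct.assoc ℂ ℂ ℂ B B B x := fun _ => rfl
  set Δ : B →ₗ[ℂ] B ⊗[ℂ] B := deltaB SC E with hΔ
  -- S1
  have S1 : ∀ x : B ⊗[ℂ] B,
      TensorProduct.assoc ℂ B B B (TensorProduct.map Δ LinearMap.id x)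
        = (Algebra.TensorProduct.assoc ℂ ℂ ℂ B B B (F ⊗ₜ[ℂ] (1 : B))) * ((1 : B) ⊗ₜ[ℂ] x) := by
    intro x
    induction x using TensorProduct.induction_on with
    | zero =>
        rw [LinearMap.map_zero, LinearEquiv.map_zero, TensorProduct.tmul_zero, mul_zero]
    | tmul a b =>
        rw [TensorProduct.map_tmul, hassoc, hdelta a]
        simp only [LinearMap.id_coe, id_eq]
        rw [show ((1 : B) ⊗ₜ[ℂ] (a ⊗ₜ[ℂ] b)) =
            Algebra.TensorProduct.assoc ℂ ℂ ℂ B B B (((1 : B) ⊗ₜ[ℂ] a) ⊗ₜ[ℂ] b) from rfl,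
          ← map_mul]
        congr 1
        rw [Algebra.TensorProduct.tmul_mul_tmul, one_mul]
    | add x y hx hy =>
        simp only [map_add, TensorProduct.tmul_add, mul_add, hx, hy]
  -- S2
  have S2 : ∀ x : B ⊗[ℂ] B,
      TensorProduct.map LinearMap.id Δ x
        = ((1 : B) ⊗ₜ[ℂ] F) * (TensorProduct.map LinearMap.id (TensorProduct.mk ℂ B B 1) x) := by
    intro x
    induction x using TensorProduct.induction_on with
    | zero => simp
    | tmul a b =>
        rw [TensorProduct.map_tmul, TensorProduct.map_tmul, hdelta b]
        simp only [Algebra.TensorProduct.tmul_mul_tmul, one_mul]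
        rfl
    | add x y hx hy =>
        simp only [map_add, mul_add, hx, hy]
  -- S3
  have S3 : ∀ x : B ⊗[ℂ] B,
      (Algebra.TensorProduct.assoc ℂ ℂ ℂ B B B (x ⊗ₜ[ℂ] (1 : B))) * ((1 : B) ⊗ₜ[ℂ] F)
        = ((1 : B) ⊗ₜ[ℂ] F) * (TensorProduct.map LinearMap.id (TensorProduct.mk ℂ B B 1) x) := by
    intro x
    induction x using TensorProduct.induction_on with
    | zero => simp
    | tmul a b =>
        rw [Algebra.TensorProduct.assoc_tmul, TensorProduct.map_tmul]
        rw [Algebra.TensorProduct.tmul_mul_tmul, Algebra.TensorProduct.tmul_mul_tmul,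
          one_mul, mul_one]
        rw [show (TensorProduct.mk ℂ B B 1) b = (1 : B) ⊗ₜ[ℂ] b from rfl]
        rw [key b]
        rfl
    | add x y hx hy =>
        simp only [map_add, TensorProduct.add_tmul, TensorProduct.tmul_add, add_mul, mul_add,
          hx, hy]
  -- coassociativity on F itself
  have G : TensorProduct.assoc ℂ B B B (TensorProduct.map Δ LinearMap.id F)
      = TensorProduct.map LinearMap.id Δ F := by
    rw [S1 F, S3 F, ← S2 F]
  -- product compatibility
  have P1 : ∀ (u : B) (x : B ⊗[ℂ] B),
      TensorProduct.map Δ LinearMap.id (x * ((1 : B) ⊗ₜ[ℂ] u))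
        = (TensorProduct.map Δ LinearMap.id x) * ((1 : B ⊗[ℂ] B) ⊗ₜ[ℂ] u) := by
    intro u x
    induction x using TensorProduct.induction_on with
    | zero => simp
    | tmul a b =>
        rw [Algebra.TensorProduct.tmul_mul_tmul, mul_one, TensorProduct.map_tmul,
          TensorProduct.map_tmul, Algebra.TensorProduct.tmul_mul_tmul, mul_one]
        rfl
    | add x y hx hy =>
        simp only [map_add, add_mul, hx, hy]
  have P2 : ∀ (u : B) (x : B ⊗[ℂ] B),
      TensorProduct.map LinearMap.id Δ (x * ((1 : B) ⊗ₜ[ℂ] u))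
        = (TensorProduct.map LinearMap.id Δ x) * ((1 : B) ⊗ₜ[ℂ] ((1 : B) ⊗ₜ[ℂ] u)) := by
    intro u x
    induction x using TensorProduct.induction_on with
    | zero => simp
    | tmul a b =>
        rw [Algebra.TensorProduct.tmul_mul_tmul, mul_one, TensorProduct.map_tmul,
          TensorProduct.map_tmul, Algebra.TensorProduct.tmul_mul_tmul, mul_one]
        simp only [LinearMap.id_coe, id_eq]
        rw [hdelta (b * u), hdelta b]
        rw [show ((1 : B) ⊗ₜ[ℂ] (b * u)) = ((1 : B) ⊗ₜ[ℂ] b) * ((1 : B) ⊗ₜ[ℂ] u) by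
          rw [Algebra.TensorProduct.tmul_mul_tmul, mul_one]]
        try rw [mul_assoc]
        try rw [← mul_assoc]
        try rfl
    | add x y hx hy =>
        simp only [map_add, add_mul, hx, hy]
  intro u
  rw [hdelta u, P1 u F, hassoc, map_mul, ← hassoc, G, P2 u F]
  congr 1
end

section
/- Let B, C be finite-dimensional ℂ-algebras with a regular separability idempotent E (anti-isomorphisms S_B, S_C, functionals φ_B, φ_C with (φ_B⊗id)E=1, (id⊗φ_C)E=1). Define the pairing ⟨c, u⟩₁ = φ_C(S_B(u)c) for c ∈ C, u ∈ B, and Δ_B(u) = F₁(1 ⊗ u) with F₁ = (id⊗S_C)(E). Then ⟨cc', u⟩₁ = ⟨c ⊗ c', Δ_B(u)⟩₁ for all c, c' ∈ C and u ∈ B, where the right side means Σ ⟨c, u₍₁₎⟩₁⟨c', u₍₂₎⟩₁ for Δ_B(u) = Σ u₍₁₎ ⊗ u₍₂₎. -/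
open TensorProduct

/-- The functional `u ↦ ⟨c, u⟩₁ = φ_C(S_B(u) c)` on `B`. -/
noncomputable def pairC {B C : Type*} [Ring B] [Algebra ℂ B] [Ring C] [Algebra ℂ C]
    (SB : B →ₗ[ℂ] C) (φC : C →ₗ[ℂ] ℂ) (c : C) : B →ₗ[ℂ] ℂ :=
  φC ∘ₗ (LinearMap.mulRight ℂ c) ∘ₗ SB

/-- The pairing `⟨c, u⟩₁ = φ_C(S_B(u) c)` turns `Δ_B` into the dual of the
product of `C`: `⟨c c', u⟩₁ = ⟨c ⊗ c', Δ_B(u)⟩₁`. -/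
theorem pairing_dual_to_product
    {B C : Type*} [Ring B] [Algebra ℂ B] [Ring C] [Algebra ℂ C]
    [FiniteDimensional ℂ B] [FiniteDimensional ℂ C]
    (SB : B →ₗ[ℂ] C) (SC : C →ₗ[ℂ] B)
    (hSBanti : ∀ a b : B, SB (a * b) = SB b * SB a)
    (hSCanti : ∀ a b : C, SC (a * b) = SC b * SC a)
    (hSBbij : Function.Bijective SB) (hSCbij : Function.Bijective SC)
    (E : B ⊗[ℂ] C)
    (hEidem : E * E = E)
    (hE1 : ∀ b : B, E * (b ⊗ₜ[ℂ] (1 : C)) = E * ((1 : B) ⊗ₜ[ℂ] SB b))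
    (hE2 : ∀ c : C, ((1 : B) ⊗ₜ[ℂ] c) * E = (SC c ⊗ₜ[ℂ] (1 : C)) * E)
    (φB : B →ₗ[ℂ] ℂ) (φC : C →ₗ[ℂ] ℂ)
    (hφB : lTens φB E = 1) (hφC : rTens φC E = 1)
    (hreg : TensorProduct.map SB SC E = TensorProduct.comm ℂ B C E) :
    ∀ (c c' : C) (u : B),
      φC (SB u * (c * c'))
        = TensorProduct.lid ℂ ℂ
            (TensorProduct.map (pairC SB φC c) (pairC SB φC c') (deltaB SC E u)) := by
  intro c c' u
  -- SB 1 = 1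
  have hSB1 : SB 1 = (1 : C) := by
    obtain ⟨a, ha⟩ := hSBbij.2 (1 : C)
    have h := hSBanti a 1
    rw [mul_one, ha, mul_one] at h
    exact h.symm
  obtain ⟨b, hb⟩ := hSBbij.2 c
  -- key generic identity
  have key : ∀ X : B ⊗[ℂ] C,
      rTens φC (TensorProduct.map SB LinearMap.id (X * (b ⊗ₜ[ℂ] (1 : C))))
        = SB b * SB (rTens φC X) := by
    intro X
    induction X using TensorProduct.induction_on with
    | zero => simp
    | tmul x y =>
        simp [rTens, Algebra.TensorProduct.tmul_mul_tmul, hSBanti, mul_smul_comm]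
    | add X Y hX hY => simp [add_mul, hX, hY, mul_add]
  have hkeyE : rTens φC (TensorProduct.map SB LinearMap.id
      (E * ((1 : B) ⊗ₜ[ℂ] c))) = c := by
    rw [← hb, ← hE1 b, key, hφC, hSB1, mul_one, hb]
  -- the functional G
  set g₁ : C →ₗ[ℂ] ℂ := φC ∘ₗ LinearMap.mulRight ℂ c with hg₁
  set g₂ : B →ₗ[ℂ] ℂ :=
    φC ∘ₗ LinearMap.mulRight ℂ c' ∘ₗ LinearMap.mulLeft ℂ (SB u) ∘ₗ SB with hg₂
  set G : C ⊗[ℂ] B →ₗ[ℂ] ℂ :=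
    (TensorProduct.lid ℂ ℂ).toLinearMap ∘ₗ TensorProduct.map g₁ g₂ with hG
  -- Claim A
  have claimA : ∀ X : B ⊗[ℂ] C,
      TensorProduct.lid ℂ ℂ (TensorProduct.map (pairC SB φC c) (pairC SB φC c')
        ((TensorProduct.map LinearMap.id SC X) * ((1 : B) ⊗ₜ[ℂ] u)))
        = G (TensorProduct.map SB SC X) := by
    intro X
    induction X using TensorProduct.induction_on with
    | zero => simp
    | tmul x y =>
        simp [hG, hg₁, hg₂, pairC, Algebra.TensorProduct.tmul_mul_tmul,
          hSBanti, mul_assoc, smul_eq_mul]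
    | add X Y hX hY => simp [add_mul, hX, hY]
  -- Claim C
  have claimC : ∀ X : B ⊗[ℂ] C,
      G (TensorProduct.comm ℂ B C X)
        = φC (SB u * (rTens φC (TensorProduct.map SB LinearMap.id
            (X * ((1 : B) ⊗ₜ[ℂ] c)))) * c') := by
    intro X
    induction X using TensorProduct.induction_on with
    | zero => simp
    | tmul x y =>
        simp [hG, hg₁, hg₂, rTens, Algebra.TensorProduct.tmul_mul_tmul,
          mul_smul_comm, smul_mul_assoc, smul_eq_mul, mul_assoc, mul_comm]
    | add X Y hX hY => simp [add_mul, hX, hY, mul_add]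
  have hdelta : deltaB SC E u
      = (TensorProduct.map LinearMap.id SC E) * ((1 : B) ⊗ₜ[ℂ] u) := rfl
  rw [hdelta, claimA E, hreg, claimC E, hkeyE, mul_assoc]
end

section
/- Let B, C be finite-dimensional ℂ-algebras with a regular separability idempotent E ∈ B ⊗ C, and let Â = B ⊗ C carry the product (u ⊗ v)(u' ⊗ v') = ε(v,u')(u ⊗ v') with ε(v,u) = φ_B(S_C(v)u). Define ψ : Â → ℂ by ψ(u ⊗ v) = φ_C(S_B(u)v). If φ_C and ε are faithful (nondegenerate), then ψ is a faithful functional on Â: ψ(ab) = 0 for all b implies a = 0, and ψ(ba) = 0 for all b implies a = 0. -/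
open TensorProduct

set_option maxHeartbeats 1000000
set_option synthInstance.maxHeartbeats 400000

/-- On the dual algebra `Â = B ⊗ C` with product
`(u ⊗ v)(u' ⊗ v') = ε(v,u')(u ⊗ v')`, the functional `ψ(u ⊗ v) = φ_C(S_B(u)v)` is
faithful, provided `φ_C` and `ε` are faithful. -/
theorem dual_right_integral_faithful
    {B C : Type*} [Ring B] [Algebra ℂ B] [Ring C] [Algebra ℂ C]
    [FiniteDimensional ℂ B] [FiniteDimensional ℂ C]
    (SB : B ≃ₗ[ℂ] C) (SC : C ≃ₗ[ℂ] B)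
    (hSBanti : ∀ a b : B, SB (a * b) = SB b * SB a)
    (hSCanti : ∀ a b : C, SC (a * b) = SC b * SC a)
    (E : B ⊗[ℂ] C)
    (hEidem : E * E = E)
    (hE1 : ∀ b : B, E * (b ⊗ₜ[ℂ] (1 : C)) = E * ((1 : B) ⊗ₜ[ℂ] SB b))
    (hE2 : ∀ c : C, ((1 : B) ⊗ₜ[ℂ] c) * E = (SC c ⊗ₜ[ℂ] (1 : C)) * E)
    (φB : B →ₗ[ℂ] ℂ) (φC : C →ₗ[ℂ] ℂ)
    (hφBC : ∀ b : B, φB b = φC (SB b))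
    (hφCB : ∀ c : C, φC c = φB (SC c))
    (hφCfaith_l : ∀ c : C, (∀ c' : C, φC (c * c') = 0) → c = 0)
    (hφCfaith_r : ∀ c : C, (∀ c' : C, φC (c' * c) = 0) → c = 0)
    (hεnd_l : ∀ v : C, (∀ u : B, φB (SC v * u) = 0) → v = 0)
    (hεnd_r : ∀ u : B, (∀ v : C, φB (SC v * u) = 0) → u = 0)
    (m : B ⊗[ℂ] C →ₗ[ℂ] B ⊗[ℂ] C →ₗ[ℂ] B ⊗[ℂ] C)
    (hm : ∀ (u u' : B) (v v' : C),
      m (u ⊗ₜ[ℂ] v) (u' ⊗ₜ[ℂ] v') = φB (SC v * u') • (u ⊗ₜ[ℂ] v'))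
    (ψ : B ⊗[ℂ] C →ₗ[ℂ] ℂ)
    (hψ : ∀ (u : B) (v : C), ψ (u ⊗ₜ[ℂ] v) = φC (SB u * v)) :
    (∀ a : B ⊗[ℂ] C, (∀ b : B ⊗[ℂ] C, ψ (m a b) = 0) → a = 0) ∧
    (∀ a : B ⊗[ℂ] C, (∀ b : B ⊗[ℂ] C, ψ (m b a) = 0) → a = 0) := by
  classical
  -- bilinear forms
  set εbil : C →ₗ[ℂ] B →ₗ[ℂ] ℂ := LinearMap.mk₂ ℂ (fun v u => φB (SC v * u))
    (fun v₁ v₂ u => by simp [map_add, add_mul])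
    (fun s v u => by simp [map_smul, smul_mul_assoc])
    (fun v u₁ u₂ => by simp [mul_add])
    (fun s v u => by simp [mul_smul_comm]) with hεbil
  set γbil : B →ₗ[ℂ] C →ₗ[ℂ] ℂ := LinearMap.mk₂ ℂ (fun u v => φC (SB u * v))
    (fun u₁ u₂ v => by simp [map_add, add_mul])
    (fun s u v => by simp [map_smul, smul_mul_assoc])
    (fun u v₁ v₂ => by simp [mul_add])
    (fun s u v => by simp [mul_smul_comm]) with hγbil
  have hBC : Module.finrank ℂ B = Module.finrank ℂ C := SB.finrank_eq
  -- the four induced maps are injective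
  have heC : Function.Injective (εbil : C →ₗ[ℂ] Module.Dual ℂ B) := by
    rw [← LinearMap.ker_eq_bot]
    apply LinearMap.ker_eq_bot'.mpr
    intro v hv
    exact hεnd_l v fun u => by simpa [hεbil] using congrFun (congrArg DFunLike.coe hv) u
  have heB : Function.Injective (γbil : B →ₗ[ℂ] Module.Dual ℂ C) := by
    rw [← LinearMap.ker_eq_bot]
    apply LinearMap.ker_eq_bot'.mpr
    intro u hu
    have h1 : ∀ v : C, φC (SB u * v) = 0 := fun v => by
      simpa [hγbil] using congrFun (congrArg DFunLike.coe hu) v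
    have := hφCfaith_l (SB u) h1
    exact (LinearEquiv.map_eq_zero_iff SB).mp this
  have hfB : Function.Injective (εbil.flip : B →ₗ[ℂ] Module.Dual ℂ C) := by
    rw [← LinearMap.ker_eq_bot]
    apply LinearMap.ker_eq_bot'.mpr
    intro u hu
    exact hεnd_r u fun v => by simpa [hεbil] using congrFun (congrArg DFunLike.coe hu) v
  have hfC : Function.Injective (γbil.flip : C →ₗ[ℂ] Module.Dual ℂ B) := by
    rw [← LinearMap.ker_eq_bot]
    apply LinearMap.ker_eq_bot'.mpr
    intro v hv
    apply hφCfaith_r v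
    intro c'
    have := congrFun (congrArg DFunLike.coe hv) (SB.symm c')
    simpa [hγbil] using this
  -- upgrade to linear equivalences by dimension count
  have hrkCB : Module.finrank ℂ C = Module.finrank ℂ (Module.Dual ℂ B) := by
    rw [Subspace.dual_finrank_eq, hBC]
  have hrkBC : Module.finrank ℂ B = Module.finrank ℂ (Module.Dual ℂ C) := by
    rw [Subspace.dual_finrank_eq, hBC]
  have heC' : Function.Bijective (εbil : C →ₗ[ℂ] Module.Dual ℂ B) :=
    ⟨heC, (LinearMap.injective_iff_surjective_of_finrank_eq_finrank hrkCB).mp heC⟩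
  have heB' : Function.Bijective (γbil : B →ₗ[ℂ] Module.Dual ℂ C) :=
    ⟨heB, (LinearMap.injective_iff_surjective_of_finrank_eq_finrank hrkBC).mp heB⟩
  have hfB' : Function.Bijective (εbil.flip : B →ₗ[ℂ] Module.Dual ℂ C) :=
    ⟨hfB, (LinearMap.injective_iff_surjective_of_finrank_eq_finrank hrkBC).mp hfB⟩
  have hfC' : Function.Bijective (γbil.flip : C →ₗ[ℂ] Module.Dual ℂ B) :=
    ⟨hfC, (LinearMap.injective_iff_surjective_of_finrank_eq_finrank hrkCB).mp hfC⟩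
  let eC : C ≃ₗ[ℂ] Module.Dual ℂ B := LinearEquiv.ofBijective _ heC'
  let eB : B ≃ₗ[ℂ] Module.Dual ℂ C := LinearEquiv.ofBijective _ heB'
  let fB : B ≃ₗ[ℂ] Module.Dual ℂ C := LinearEquiv.ofBijective _ hfB'
  let fC : C ≃ₗ[ℂ] Module.Dual ℂ B := LinearEquiv.ofBijective _ hfC'
  -- the two "Gram" equivalences
  let Θ₁ : B ⊗[ℂ] C ≃ₗ[ℂ] Module.Dual ℂ (B ⊗[ℂ] C) :=
    (TensorProduct.comm ℂ B C) ≪≫ₗ (TensorProduct.congr eC eB) ≪≫ₗ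
      (TensorProduct.dualDistribEquiv ℂ B C)
  let Θ₂ : B ⊗[ℂ] C ≃ₗ[ℂ] Module.Dual ℂ (C ⊗[ℂ] B) :=
    (TensorProduct.congr fB fC) ≪≫ₗ (TensorProduct.dualDistribEquiv ℂ C B)
  have hdd : ∀ (f : Module.Dual ℂ B) (g : Module.Dual ℂ C) (x : B ⊗[ℂ] C),
      (TensorProduct.dualDistribEquiv ℂ B C) (f ⊗ₜ[ℂ] g) x =
        TensorProduct.dualDistrib ℂ B C (f ⊗ₜ[ℂ] g) x := by
    intro f g x
    rfl
  have hdd' : ∀ (f : Module.Dual ℂ C) (g : Module.Dual ℂ B) (x : C ⊗[ℂ] B),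
      (TensorProduct.dualDistribEquiv ℂ C B) (f ⊗ₜ[ℂ] g) x =
        TensorProduct.dualDistrib ℂ C B (f ⊗ₜ[ℂ] g) x := by
    intro f g x
    rfl
  -- key evaluation identities
  have key₁ : ∀ a b : B ⊗[ℂ] C, Θ₁ a b = ψ (m a b) := by
    intro a b
    induction a using TensorProduct.induction_on with
    | zero => simp only [map_zero, LinearMap.zero_apply]
    | add x y hx hy => simp only [map_add, LinearMap.add_apply, hx, hy]
    | tmul u v =>
      induction b using TensorProduct.induction_on with
      | zero => simp only [map_zero, LinearMap.map_zero]
      | add x y hx hy => simp only [map_add, LinearMap.map_add, hx, hy]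
      | tmul u' v' =>
        have : Θ₁ (u ⊗ₜ[ℂ] v) (u' ⊗ₜ[ℂ] v') =
            (TensorProduct.dualDistribEquiv ℂ B C) (εbil v ⊗ₜ[ℂ] γbil u) (u' ⊗ₜ[ℂ] v') := rfl
        rw [this, hdd, TensorProduct.dualDistrib_apply, hm, map_smul, hψ]
        simp [hεbil, hγbil, smul_eq_mul]
  have key₂ : ∀ a b : B ⊗[ℂ] C, Θ₂ a ((TensorProduct.comm ℂ B C) b) = ψ (m b a) := by
    intro a b
    induction a using TensorProduct.induction_on with
    | zero => simp only [map_zero, LinearMap.zero_apply, LinearMap.map_zero]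
    | add x y hx hy =>
        simp only [map_add, LinearMap.add_apply, LinearMap.map_add] at *
        rw [hx, hy]
    | tmul u' v' =>
      induction b using TensorProduct.induction_on with
      | zero => simp only [map_zero, LinearMap.map_zero, LinearMap.zero_apply]
      | add x y hx hy =>
          simp only [map_add, LinearMap.add_apply, LinearMap.map_add] at *
          rw [hx, hy]
      | tmul u v =>
        have : Θ₂ (u' ⊗ₜ[ℂ] v') ((TensorProduct.comm ℂ B C) (u ⊗ₜ[ℂ] v)) =
            (TensorProduct.dualDistribEquiv ℂ C B)
              (εbil.flip u' ⊗ₜ[ℂ] γbil.flip v') (v ⊗ₜ[ℂ] u) := rfl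
        rw [this, hdd', TensorProduct.dualDistrib_apply, hm, map_smul, hψ]
        simp [hεbil, hγbil, smul_eq_mul, mul_comm]
  constructor
  · intro a ha
    have h0 : Θ₁ a = 0 := LinearMap.ext fun b => by
      rw [LinearMap.zero_apply]
      exact (key₁ a b).trans (ha b)
    exact (LinearEquiv.map_eq_zero_iff Θ₁).mp h0
  · intro a ha
    have h0 : Θ₂ a = 0 := LinearMap.ext fun c => by
      obtain ⟨b, rfl⟩ : ∃ b, (TensorProduct.comm ℂ B C) b = c :=
        ⟨(TensorProduct.comm ℂ B C).symm c, (TensorProduct.comm ℂ B C).apply_symm_apply c⟩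
      rw [LinearMap.zero_apply]
      exact (key₂ a b).trans (ha b)
    exact (LinearEquiv.map_eq_zero_iff Θ₂).mp h0
end

section
/- In the setting of the previous statement (Â = B ⊗ C with product (u⊗v)(u'⊗v') = ε(v,u')(u⊗v') and ψ(u⊗v) = φ_C(S_B(u)v)), the functional ψ satisfies the KMS-type identity ψ(ab) = ψ(b σ'(a)) for all a, b ∈ Â, where σ'(u ⊗ v) = σ_B⁻¹(u) ⊗ σ_C(v) with σ_B = (S_C S_B)⁻¹ and σ_C = S_B S_C. -/
open TensorProduct

/-- The functional `ψ(u ⊗ v) = φ_C(S_B(u)v)` on the dual algebra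
`Â = B ⊗ C` satisfies the KMS identity `ψ(ab) = ψ(b σ'(a))` with
`σ'(u ⊗ v) = σ_B⁻¹(u) ⊗ σ_C(v)`, where `σ_B = (S_C S_B)⁻¹` and `σ_C = S_B S_C`. -/
theorem dual_right_integral_kms
    {B C : Type*} [Ring B] [Algebra ℂ B] [Ring C] [Algebra ℂ C]
    [FiniteDimensional ℂ B] [FiniteDimensional ℂ C]
    (SB : B ≃ₗ[ℂ] C) (SC : C ≃ₗ[ℂ] B)
    (hSBanti : ∀ a b : B, SB (a * b) = SB b * SB a)
    (hSCanti : ∀ a b : C, SC (a * b) = SC b * SC a)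
    (E : B ⊗[ℂ] C)
    (hEidem : E * E = E)
    (hE1 : ∀ b : B, E * (b ⊗ₜ[ℂ] (1 : C)) = E * ((1 : B) ⊗ₜ[ℂ] SB b))
    (hE2 : ∀ c : C, ((1 : B) ⊗ₜ[ℂ] c) * E = (SC c ⊗ₜ[ℂ] (1 : C)) * E)
    (φB : B →ₗ[ℂ] ℂ) (φC : C →ₗ[ℂ] ℂ)
    (hφBC : ∀ b : B, φB b = φC (SB b))
    (hφCB : ∀ c : C, φC c = φB (SC c))
    -- KMS properties of the distinguished functionals
    (hKMSB : ∀ b b' : B, φB (b * b') = φB (b' * (SB.trans SC).symm b))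
    (hKMSC : ∀ c c' : C, φC (c * c') = φC (c' * (SC.trans SB) c))
    (m : B ⊗[ℂ] C →ₗ[ℂ] B ⊗[ℂ] C →ₗ[ℂ] B ⊗[ℂ] C)
    (hm : ∀ (u u' : B) (v v' : C),
      m (u ⊗ₜ[ℂ] v) (u' ⊗ₜ[ℂ] v') = φB (SC v * u') • (u ⊗ₜ[ℂ] v'))
    (ψ : B ⊗[ℂ] C →ₗ[ℂ] ℂ)
    (hψ : ∀ (u : B) (v : C), ψ (u ⊗ₜ[ℂ] v) = φC (SB u * v))
    (σ' : B ⊗[ℂ] C →ₗ[ℂ] B ⊗[ℂ] C)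
    (hσ' : ∀ (u : B) (v : C),
      σ' (u ⊗ₜ[ℂ] v) = ((SB.trans SC) u) ⊗ₜ[ℂ] ((SC.trans SB) v)) :
    ∀ a b : B ⊗[ℂ] C, ψ (m a b) = ψ (m b (σ' a)) := by
  have key : ∀ (u u' : B) (v v' : C),
      ψ (m (u ⊗ₜ[ℂ] v) (u' ⊗ₜ[ℂ] v')) = ψ (m (u' ⊗ₜ[ℂ] v') (σ' (u ⊗ₜ[ℂ] v))) := by
    intro u u' v v'
    rw [hσ', hm, hm, map_smul, map_smul, hψ, hψ]
    have h1 : φB (SC v' * (SB.trans SC) u) = φC (SB u * v') := by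
      simp only [LinearEquiv.trans_apply]
      rw [← hSCanti, ← hφCB]
    have h2 : φC (SB u' * (SC.trans SB) v) = φB (SC v * u') := by
      simp only [LinearEquiv.trans_apply]
      rw [← hSBanti, ← hφBC]
    rw [h1, h2]
    simp only [smul_eq_mul]; ring
  intro a b
  induction a using TensorProduct.induction_on with
  | zero => simp
  | tmul u v =>
    induction b using TensorProduct.induction_on with
    | zero => simp
    | tmul u' v' => exact key u u' v v'
    | add x y hx hy => simp [map_add, hx, hy]
  | add x y hx hy => simp [map_add, hx, hy]
end
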